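/- Let I and J be compact convex subsets of Hausdorff locally convex topological vector spaces and f : I × J → ℂ a bounded function, separately continuous and affine in each variable. Then the set of rows {f(i,·) : i ∈ I} is weakly compact in the Banach space C(J) of continuous functions with sup-norm. -/

import Mathlib

open BoundedContinuousFunction Complex

/-- `v : B →ᵇ ℂ` is affine on `B`. -/
def IsAffOn {F : Type*} [AddCommGroup F] [Module ℝ F] [TopologicalSpace F]
    (B : Set F) (v : ↥B →ᵇ ℂ) : Prop :=
  ∀ (b₁ b₂ : ↥B) (t : ℝ), 0 ≤ t → t ≤ 1 →
    ∀ (p : t • (b₁ : F) + (1 - t) • (b₂ : F) ∈ B),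
      v ⟨t • (b₁ : F) + (1 - t) • (b₂ : F), p⟩ = (t : ℂ) * v b₁ + (1 - (t : ℂ)) * v b₂

/-- A combination of four evaluation functionals on `B →ᵇ ℂ`. -/
noncomputable def Lq {F : Type*} [AddCommGroup F] [Module ℝ F] [TopologicalSpace F]
    (B : Set F) (r : Fin 4 → ℝ) (x : Fin 4 → ↥B) : ((↥B →ᵇ ℂ) →L[ℂ] ℂ) :=
  (r 0 : ℂ) • evalCLM ℂ (x 0) - (r 1 : ℂ) • evalCLM ℂ (x 1)
    + (Complex.I * (r 2 : ℂ)) • evalCLM ℂ (x 2)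
    - (Complex.I * (r 3 : ℂ)) • evalCLM ℂ (x 3)

lemma Lq_apply {F : Type*} [AddCommGroup F] [Module ℝ F] [TopologicalSpace F]
    (B : Set F) (r : Fin 4 → ℝ) (x : Fin 4 → ↥B) (h : ↥B →ᵇ ℂ) :
    Lq B r x h = (r 0 : ℂ) * h (x 0) - (r 1 : ℂ) * h (x 1)
      + Complex.I * ((r 2 : ℂ) * h (x 2)) - Complex.I * ((r 3 : ℂ) * h (x 3)) := by
  simp only [Lq, ContinuousLinearMap.sub_apply, ContinuousLinearMap.add_apply,
    ContinuousLinearMap.smul_apply, smul_eq_mul, BoundedContinuousFunction.evalCLM_apply]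
  ring

lemma exists_merge {F : Type*} [AddCommGroup F] [Module ℝ F] [TopologicalSpace F]
    {B : Set F} (hBc : Convex ℝ B) {a b rk rk' : ℝ} (ha : 0 ≤ a) (hb : 0 ≤ b)
    (hab : a + b = 1) (hrk : 0 ≤ rk) (hrk' : 0 ≤ rk') (x x' : ↥B) :
    ∃ y : ↥B, ∀ v : ↥B →ᵇ ℂ, IsAffOn B v →
      ((a * rk + b * rk' : ℝ) : ℂ) * v y
        = (a : ℂ) * (rk : ℂ) * v x + (b : ℂ) * (rk' : ℂ) * v x' := by
  by_cases hs : a * rk + b * rk' = 0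
  · have h1 : a * rk = 0 := by nlinarith [mul_nonneg ha hrk, mul_nonneg hb hrk']
    have h2 : b * rk' = 0 := by nlinarith [mul_nonneg ha hrk, mul_nonneg hb hrk']
    have h1c : (a : ℂ) * (rk : ℂ) = 0 := by exact_mod_cast h1
    have h2c : (b : ℂ) * (rk' : ℂ) = 0 := by exact_mod_cast h2
    exact ⟨x, fun v _ => by rw [hs, h1c, h2c]; simp⟩
  · have hspos : 0 < a * rk + b * rk' :=
      lt_of_le_of_ne (by positivity) (Ne.symm hs)
    set s := a * rk + b * rk' with hsdef
    set lam := a * rk / s with hlam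
    have hl0 : 0 ≤ lam := div_nonneg (by positivity) hspos.le
    have hl1 : lam ≤ 1 := by
      rw [hlam, div_le_one hspos]; nlinarith [mul_nonneg hb hrk']
    have hmem : lam • (x : F) + (1 - lam) • (x' : F) ∈ B :=
      hBc x.2 x'.2 hl0 (by linarith) (by ring)
    refine ⟨⟨_, hmem⟩, fun v hv => ?_⟩
    rw [hv x x' lam hl0 hl1 hmem]
    have er1 : s * lam = a * rk := by rw [hlam]; field_simp
    have er2 : s * (1 - lam) = b * rk' := by rw [hlam]; field_simp; ring
    have e1 : (s : ℂ) * (lam : ℂ) = (a : ℂ) * (rk : ℂ) := by exact_mod_cast er1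
    have e2 : (s : ℂ) * (1 - (lam : ℂ)) = (b : ℂ) * (rk' : ℂ) := by
      exact_mod_cast er2
    linear_combination (v x) * e1 + (v x') * e2

set_option maxHeartbeats 1000000 in
/-- Every continuous linear functional on `B →ᵇ ℂ`, tested against a family of
affine functions, is given by a combination of four point evaluations. -/
lemma rep_lemma {F : Type*} [AddCommGroup F] [Module ℝ F] [TopologicalSpace F]
    {B : Set F} (hB : IsCompact B) (hBc : Convex ℝ B) (hne : Nonempty ↥B)
    {ι : Type*} (v : ι → (↥B →ᵇ ℂ)) (hv : ∀ i, IsAffOn B (v i))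
    (φ : (↥B →ᵇ ℂ) →L[ℂ] ℂ) :
    ∃ (r : Fin 4 → ℝ) (x : Fin 4 → ↥B), ∀ i,
      φ (v i) = (r 0 : ℂ) * v i (x 0) - (r 1 : ℂ) * v i (x 1)
        + Complex.I * ((r 2 : ℂ) * v i (x 2)) - Complex.I * ((r 3 : ℂ) * v i (x 3)) := by
  classical
  haveI : CompactSpace ↥B := isCompact_iff_compactSpace.mp hB
  set M : ℝ := ‖φ‖ + 1 with hM
  have hM1 : ‖φ‖ ≤ M := by simp [hM]
  have hM0 : (0:ℝ) ≤ M := le_trans (norm_nonneg φ) hM1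
  set K : Set ((Fin 4 → ℝ) × (Fin 4 → ↥B)) :=
    (Set.univ.pi fun _ : Fin 4 => Set.Icc (0:ℝ) M) ×ˢ (Set.univ : Set (Fin 4 → ↥B)) with hK
  set D : Set (ι → ℂ) := (fun p (i : ι) => Lq B p.1 p.2 (v i)) '' K with hD
  suffices hmem : (fun i => φ (v i)) ∈ D by
    rw [hD] at hmem
    obtain ⟨p, hp, hpe⟩ := hmem
    refine ⟨p.1, p.2, fun i => ?_⟩
    have h2 := congrFun hpe i
    simp only [] at h2
    rw [← h2, Lq_apply]
  by_contra hnotD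
  -- D is compact
  have hKc : IsCompact K :=
    (isCompact_univ_pi fun _ => isCompact_Icc).prod isCompact_univ
  have hεc : Continuous (fun (p : (Fin 4 → ℝ) × (Fin 4 → ↥B)) (i : ι) => Lq B p.1 p.2 (v i)) := by
    refine continuous_pi fun i => ?_
    show Continuous fun p : (Fin 4 → ℝ) × (Fin 4 → ↥B) => Lq B p.1 p.2 (v i)
    have he : (fun p : (Fin 4 → ℝ) × (Fin 4 → ↥B) => Lq B p.1 p.2 (v i))
        = fun p => ((p.1 0 : ℝ) : ℂ) * v i (p.2 0) - ((p.1 1 : ℝ) : ℂ) * v i (p.2 1)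
          + Complex.I * (((p.1 2 : ℝ) : ℂ) * v i (p.2 2))
          - Complex.I * (((p.1 3 : ℝ) : ℂ) * v i (p.2 3)) := by
      funext p; rw [Lq_apply]
    rw [he]
    have hr : ∀ k : Fin 4, Continuous fun p : (Fin 4 → ℝ) × (Fin 4 → ↥B) =>
        ((p.1 k : ℝ) : ℂ) :=
      fun k => Complex.continuous_ofReal.comp ((continuous_apply k).comp continuous_fst)
    have hx : ∀ k : Fin 4, Continuous fun p : (Fin 4 → ℝ) × (Fin 4 → ↥B) => v i (p.2 k) :=
      fun k => (map_continuous (v i)).comp ((continuous_apply k).comp continuous_snd)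
    exact ((((hr 0).mul (hx 0)).sub ((hr 1).mul (hx 1))).add
      (continuous_const.mul ((hr 2).mul (hx 2)))).sub
      (continuous_const.mul ((hr 3).mul (hx 3)))
  have hDc : IsCompact D := by
    rw [hD]; exact hKc.image hεc
  -- D is convex
  have hDconv : Convex ℝ D := by
    rw [hD]
    rintro d₁ ⟨p, hp, rfl⟩ d₂ ⟨q, hq, rfl⟩ a b ha hb hab
    have hpr : ∀ k, p.1 k ∈ Set.Icc (0:ℝ) M := fun k => hp.1 k (Set.mem_univ k)
    have hqr : ∀ k, q.1 k ∈ Set.Icc (0:ℝ) M := fun k => hq.1 k (Set.mem_univ k)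
    have hch : ∀ k : Fin 4, ∃ y : ↥B, ∀ w : ↥B →ᵇ ℂ, IsAffOn B w →
        ((a * p.1 k + b * q.1 k : ℝ) : ℂ) * w y
          = (a : ℂ) * (p.1 k : ℂ) * w (p.2 k) + (b : ℂ) * (q.1 k : ℂ) * w (q.2 k) :=
      fun k => exists_merge hBc ha hb hab (hpr k).1 (hqr k).1 (p.2 k) (q.2 k)
    choose y hy using hch
    refine ⟨⟨fun k => a * p.1 k + b * q.1 k, y⟩, ⟨fun k _ => ?_, Set.mem_univ _⟩, ?_⟩
    · constructor
      · have h1 := (hpr k).1; have h2 := (hqr k).1; positivity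
      · have h1 := (hpr k).2; have h2 := (hqr k).2
        have e1 := mul_le_mul_of_nonneg_left h1 ha
        have e2 := mul_le_mul_of_nonneg_left h2 hb
        calc a * p.1 k + b * q.1 k ≤ a * M + b * M := by linarith
          _ = M := by rw [← add_mul, hab, one_mul]
    · funext i
      have e0 := hy 0 (v i) (hv i)
      have e1 := hy 1 (v i) (hv i)
      have e2 := hy 2 (v i) (hv i)
      have e3 := hy 3 (v i) (hv i)
      show Lq B (fun k => a * p.1 k + b * q.1 k) y (v i)
          = a • (Lq B p.1 p.2 (v i)) + b • (Lq B q.1 q.2 (v i))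
      rw [Lq_apply, Lq_apply, Lq_apply]
      simp only [Complex.real_smul]
      push_cast at e0 e1 e2 e3 ⊢
      linear_combination e0 - e1 + Complex.I * e2 - Complex.I * e3
  -- separate the point from `D` by finitely many coordinates
  have hφhD : (fun i => φ (v i)) ∈ Dᶜ := hnotD
  have hDo : IsOpen Dᶜ := (hDc.isClosed).isOpen_compl
  obtain ⟨Fs, u, hu, hsub⟩ := isOpen_pi_iff.mp hDo _ hφhD
  set π : (ι → ℂ) → (↥Fs → ℂ) := fun d => fun j => d j.val with hπ
  have hπlin : π = ⇑(LinearMap.funLeft ℝ ℂ (fun j : ↥Fs => (j : ι))) := rfl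
  have hπc : Continuous π := continuous_pi fun j => continuous_apply _
  have hsconv : Convex ℝ (π '' D) := by
    rw [hπlin]; exact hDconv.linear_image _
  have hscomp : IsCompact (π '' D) := hDc.image hπc
  have hnotmem : π (fun i => φ (v i)) ∉ π '' D := by
    rintro ⟨d, hdD, hde⟩
    have hdp : d ∈ (Fs : Set ι).pi u := by
      intro i hi
      have hdi : d i = φ (v i) := congrFun hde ⟨i, hi⟩
      rw [hdi]
      exact (hu i hi).2
    exact (hsub hdp) hdD
  obtain ⟨fl, u0, hfl, hfu⟩ :=
    geometric_hahn_banach_closed_point hsconv hscomp.isClosed hnotmem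
  -- decompose fl as real part of a complex-linear combination of coordinates
  set c : ↥Fs → ℂ := fun j =>
    ((fl ((Pi.single j (1:ℂ)) : ↥Fs → ℂ) : ℝ) : ℂ)
      - Complex.I * ((fl ((Pi.single j Complex.I) : ↥Fs → ℂ) : ℝ) : ℂ) with hc
  have hfl_eq : ∀ z : ↥Fs → ℂ, fl z = (∑ j, c j * z j).re := by
    intro z
    have hz : z = ∑ j, Pi.single j (z j) := (Finset.univ_sum_single z).symm
    calc fl z = ∑ j, fl (Pi.single j (z j)) := by
          conv_lhs => rw [hz]
          exact map_sum fl _ _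
      _ = ∑ j, (c j * z j).re := by
          refine Finset.sum_congr rfl fun j _ => ?_
          have hzj : z j = (z j).re • (1:ℂ) + (z j).im • Complex.I := by
            rw [Complex.real_smul, Complex.real_smul, mul_one, Complex.re_add_im]
          have hsingle : (Pi.single j (z j) : ↥Fs → ℂ)
              = (z j).re • (Pi.single j (1:ℂ) : ↥Fs → ℂ)
                + (z j).im • (Pi.single j Complex.I : ↥Fs → ℂ) := by
            rw [← Pi.single_smul, ← Pi.single_smul, ← Pi.single_add, ← hzj]
          rw [hsingle, map_add, map_smul, map_smul, smul_eq_mul, smul_eq_mul]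
          simp only [hc, Complex.mul_re, Complex.sub_re, Complex.ofReal_re, Complex.mul_re,
            Complex.I_re, Complex.ofReal_im, Complex.I_im, Complex.sub_im, Complex.mul_im]
          ring
      _ = (∑ j, c j * z j).re := (Complex.re_sum _ _).symm
  -- the test function w
  set w : ↥B →ᵇ ℂ := ∑ j : ↥Fs, c j • v (j : ι) with hw
  have hφw : (∑ j : ↥Fs, c j * φ (v (j : ι))) = φ w := by
    rw [hw, map_sum]
    exact Finset.sum_congr rfl fun j _ => by rw [map_smul, smul_eq_mul]
  have hLw : ∀ r x, (∑ j : ↥Fs, c j * Lq B r x (v (j : ι))) = Lq B r x w := by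
    intro r x
    rw [hw, map_sum]
    exact Finset.sum_congr rfl fun j _ => by rw [map_smul, smul_eq_mul]
  have key1 : u0 < (φ w).re := by
    have h := hfu
    rw [hfl_eq] at h
    have e : (∑ j, c j * π (fun i => φ (v i)) j) = φ w := by
      rw [← hφw]
    rwa [e] at h
  have key2 : ∀ p ∈ K, (Lq B p.1 p.2 w).re < u0 := by
    intro p hp
    have hmemD : (fun i => Lq B p.1 p.2 (v i)) ∈ D := by
      rw [hD]; exact ⟨p, hp, rfl⟩
    have h := hfl (π (fun i => Lq B p.1 p.2 (v i))) ⟨_, hmemD, rfl⟩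
    rw [hfl_eq] at h
    have e : (∑ j, c j * π (fun i => Lq B p.1 p.2 (v i)) j) = Lq B p.1 p.2 w := by
      rw [← hLw]
    rwa [e] at h
  -- pick the norm-attaining point
  obtain ⟨b₀, -, hb₀⟩ := (isCompact_univ (X := ↥B)).exists_isMaxOn Set.univ_nonempty
    (map_continuous w).norm.continuousOn
  have hwnorm : ‖w‖ = ‖w b₀‖ := by
    apply le_antisymm
    · exact (BoundedContinuousFunction.norm_le (norm_nonneg _)).mpr
        fun x => hb₀ (Set.mem_univ x)
    · exact BoundedContinuousFunction.norm_coe_le_norm w b₀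
  set z : ℂ := (starRingEnd ℂ) (w b₀) / ((‖w b₀‖ : ℝ) : ℂ) with hz
  have hzabs : ‖z‖ ≤ 1 := by
    rw [hz]
    by_cases h : w b₀ = 0
    · simp [h]
    · rw [norm_div, Complex.norm_conj, Complex.norm_real, norm_norm,
        div_self (norm_ne_zero_iff.mpr h)]
  set d : Fin 4 → ℝ := ![z.re, -z.re, z.im, -z.im] with hd
  have hd0 : d 0 = z.re := rfl
  have hd1 : d 1 = -z.re := rfl
  have hd2 : d 2 = z.im := rfl
  have hd3 : d 3 = -z.im := rfl
  have hdle : ∀ k, max (d k) 0 ≤ 1 := by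
    intro k
    refine max_le ?_ zero_le_one
    fin_cases k
    · exact le_trans (le_abs_self _) (le_trans (Complex.abs_re_le_norm z) hzabs)
    · exact le_trans (neg_le_abs _) (le_trans (Complex.abs_re_le_norm z) hzabs)
    · exact le_trans (le_abs_self _) (le_trans (Complex.abs_im_le_norm z) hzabs)
    · exact le_trans (neg_le_abs _) (le_trans (Complex.abs_im_le_norm z) hzabs)
  set r : Fin 4 → ℝ := fun k => ‖φ‖ * max (d k) 0 with hrdef
  have hrK : (⟨r, fun _ => b₀⟩ : (Fin 4 → ℝ) × (Fin 4 → ↥B)) ∈ K := by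
    refine ⟨fun k _ => ⟨mul_nonneg (norm_nonneg φ) (le_max_right _ _), ?_⟩, Set.mem_univ _⟩
    calc ‖φ‖ * max (d k) 0 ≤ ‖φ‖ * 1 := mul_le_mul_of_nonneg_left (hdle k) (norm_nonneg φ)
      _ ≤ M := by rw [mul_one]; exact hM1
  have hzw : z * w b₀ = ((‖w b₀‖ : ℝ) : ℂ) := by
    by_cases h : w b₀ = 0
    · simp [hz, h]
    · have hne0 : ((‖w b₀‖ : ℝ) : ℂ) ≠ 0 := by
        simpa using h
      rw [hz, div_mul_eq_mul_div, mul_comm ((starRingEnd ℂ) (w b₀)) (w b₀), Complex.mul_conj,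
        Complex.normSq_eq_norm_sq, div_eq_iff hne0]
      norm_cast
      ring
  have h01 : r 0 - r 1 = ‖φ‖ * z.re := by
    rw [hrdef]
    simp only [hd0, hd1]
    rw [← mul_sub]
    congr 1
    rcases le_total z.re 0 with h | h
    · rw [max_eq_right h, max_eq_left (by linarith)]; ring
    · rw [max_eq_left h, max_eq_right (by linarith)]; ring
  have h23 : r 2 - r 3 = ‖φ‖ * z.im := by
    rw [hrdef]
    simp only [hd2, hd3]
    rw [← mul_sub]
    congr 1
    rcases le_total z.im 0 with h | h
    · rw [max_eq_right h, max_eq_left (by linarith)]; ring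
    · rw [max_eq_left h, max_eq_right (by linarith)]; ring
  have hcomb : ((r 0 : ℂ) - (r 1 : ℂ)) + Complex.I * ((r 2 : ℂ) - (r 3 : ℂ))
      = ((‖φ‖ : ℝ) : ℂ) * z := by
    have c01 : (r 0 : ℂ) - (r 1 : ℂ) = ((‖φ‖ * z.re : ℝ) : ℂ) := by
      rw [← Complex.ofReal_sub, h01]
    have c23 : (r 2 : ℂ) - (r 3 : ℂ) = ((‖φ‖ * z.im : ℝ) : ℂ) := by
      rw [← Complex.ofReal_sub, h23]
    rw [c01, c23]
    push_cast
    linear_combination ((‖φ‖ : ℝ) : ℂ) * Complex.re_add_im z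
  have hLval : Lq B r (fun _ => b₀) w = ((‖φ‖ * ‖w‖ : ℝ) : ℂ) := by
    refine (Lq_apply _ _ _ _).trans ?_
    calc (r 0 : ℂ) * w b₀ - (r 1 : ℂ) * w b₀ + Complex.I * ((r 2 : ℂ) * w b₀)
          - Complex.I * ((r 3 : ℂ) * w b₀)
        = (((r 0 : ℂ) - (r 1 : ℂ)) + Complex.I * ((r 2 : ℂ) - (r 3 : ℂ))) * w b₀ := by ring
      _ = ((‖φ‖ : ℝ) : ℂ) * (z * w b₀) := by rw [hcomb]; ring
      _ = ((‖φ‖ : ℝ) : ℂ) * ((‖w b₀‖ : ℝ) : ℂ) := by rw [hzw]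
      _ = ((‖φ‖ * ‖w‖ : ℝ) : ℂ) := by rw [hwnorm]; push_cast; ring
  have hK2 : (Lq B r (fun _ => b₀) w).re < u0 := key2 ⟨r, fun _ => b₀⟩ hrK
  rw [hLval, Complex.ofReal_re] at hK2
  have hub : (φ w).re ≤ ‖φ‖ * ‖w‖ :=
    le_trans (Complex.re_le_norm _) (by exact φ.le_opNorm w)
  linarith

set_option maxHeartbeats 1000000 in
/-- `A`, `B` compact convex subsets of Hausdorff locally convex
TVSs, `f` bounded, separately continuous and affine in each variable.  Then the
set of rows (here `g a` is the row `f a` as a bounded continuous function on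
`B`) is weakly compact in `C(B)`. -/
theorem rows_weakly_compact_of_affine {E F : Type*}
    [AddCommGroup E] [Module ℝ E] [TopologicalSpace E] [IsTopologicalAddGroup E]
    [ContinuousSMul ℝ E] [LocallyConvexSpace ℝ E] [T2Space E]
    [AddCommGroup F] [Module ℝ F] [TopologicalSpace F] [IsTopologicalAddGroup F]
    [ContinuousSMul ℝ F] [LocallyConvexSpace ℝ F] [T2Space F]
    (A : Set E) (B : Set F) (hA : IsCompact A) (hAc : Convex ℝ A)
    (hB : IsCompact B) (hBc : Convex ℝ B)
    (f : E → F → ℂ) (hb : ∃ C, ∀ a ∈ A, ∀ b ∈ B, ‖f a b‖ ≤ C)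
    (hrow : ∀ a ∈ A, ContinuousOn (f a) B)
    (hcol : ∀ b ∈ B, ContinuousOn (fun a => f a b) A)
    (haff₁ : ∀ b ∈ B, ∀ a₁ ∈ A, ∀ a₂ ∈ A, ∀ t : ℝ, 0 ≤ t → t ≤ 1 →
      f (t • a₁ + (1 - t) • a₂) b = (t : ℂ) * f a₁ b + (1 - (t : ℂ)) * f a₂ b)
    (haff₂ : ∀ a ∈ A, ∀ b₁ ∈ B, ∀ b₂ ∈ B, ∀ t : ℝ, 0 ≤ t → t ≤ 1 →
      f a (t • b₁ + (1 - t) • b₂) = (t : ℂ) * f a b₁ + (1 - (t : ℂ)) * f a b₂)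
    (g : A → (B →ᵇ ℂ)) (hg : ∀ (a : A) (b : B), g a b = f a b) :
    IsCompact (toWeakSpace ℂ (↥B →ᵇ ℂ) '' Set.range g) := by
  classical
  haveI : CompactSpace ↥A := isCompact_iff_compactSpace.mp hA
  -- each row is affine
  have hgAff : ∀ a : ↥A, IsAffOn B (g a) := by
    intro a b₁ b₂ t ht ht' p
    rw [hg, hg, hg]
    exact haff₂ a a.2 b₁ b₁.2 b₂ b₂.2 t ht ht'
  -- the map into the weak space is continuous
  have hcont : Continuous fun a : ↥A => toWeakSpace ℂ (↥B →ᵇ ℂ) (g a) := by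
    refine WeakBilin.continuous_of_continuous_eval _ fun φ => ?_
    show Continuous fun a : ↥A => φ (g a)
    by_cases hne : Nonempty ↥B
    · obtain ⟨r, x, hr⟩ := rep_lemma hB hBc hne (fun a : ↥A => g a) hgAff φ
      have he : (fun a : ↥A => φ (g a)) = fun a : ↥A =>
          (r 0 : ℂ) * f a (x 0) - (r 1 : ℂ) * f a (x 1)
            + Complex.I * ((r 2 : ℂ) * f a (x 2))
            - Complex.I * ((r 3 : ℂ) * f a (x 3)) := by
        funext a
        rw [hr a, hg, hg, hg, hg]
      rw [he]
      have hcf : ∀ k : Fin 4, Continuous fun a : ↥A => f a (x k) := by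
        intro k
        exact (hcol (x k) (x k).2).restrict
      exact ((((continuous_const.mul (hcf 0)).sub (continuous_const.mul (hcf 1))).add
        (continuous_const.mul (continuous_const.mul (hcf 2)))).sub
        (continuous_const.mul (continuous_const.mul (hcf 3))))
    · haveI := not_nonempty_iff.mp hne
      have hg0 : ∀ a : ↥A, g a = 0 := by
        intro a
        ext b
        exact absurd b.2 (by simpa using (IsEmpty.false b))
      have hconst : (fun a : ↥A => φ (g a)) = fun _ : ↥A => φ 0 := by
        funext a; rw [hg0 a]
      rw [hconst]
      exact continuous_const
  have hrange : Set.range (fun a : ↥A => toWeakSpace ℂ (↥B →ᵇ ℂ) (g a))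
      = toWeakSpace ℂ (↥B →ᵇ ℂ) '' Set.range g := by
    rw [← Set.range_comp]
    rfl
  rw [← hrange]
  exact isCompact_range hcont
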